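/- (D*-reduction lemma) Let A ⊆ R{x̄}_{D*} \ R. Then for any g ∈ R{x̄}_{D*} there exist H, g₀ ∈ R{x̄}_{D*} such that H is a product of σ-transforms of initials and separants of elements of A, g₀ is reduced with respect to A, rk(g₀) ≤ rk(g), and H·g ≡ g₀ mod [A]_D, where [A]_D is the D-ideal generated by A. -/

import Mathlib

open MvPolynomial
open scoped BigOperators

/-- The variables `dᶿxⱼ` of the `D*`-polynomial ring in `n` indeterminates with `M`
operators: a pair (index of `x`, multi-exponent `θ ∈ ℕ^M`). -/
abbrev DVar (n M : ℕ) : Type := Fin n × (Fin M → ℕ)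

/-- Applying the composite operator with multi-exponent `φ` to a variable. -/
def shiftVar {n M : ℕ} (u : DVar n M) (φ : Fin M → ℕ) : DVar n M :=
  (u.1, fun l => u.2 l + φ l)

/-- `φ` encodes a composition of the associated endomorphisms only (a `σ`-transform). -/
def IsSigmaExp {M : ℕ} (σset : Finset (Fin M)) (φ : Fin M → ℕ) : Prop :=
  ∀ k, φ k ≠ 0 → k ∈ σset

/-- `φ` encodes a composition of operators involving at least one derivation-type
operator (a `δ`-transform). -/
def IsDeltaExp {M : ℕ} (σset : Finset (Fin M)) (φ : Fin M → ℕ) : Prop :=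
  ∃ k, k ∉ σset ∧ φ k ≠ 0

/-- `u` is the leader of `f`: the highest-ranked variable occurring in `f`. -/
def IsLeader {R : Type} [CommRing R] {n M : ℕ} (lt : DVar n M → DVar n M → Prop)
    (f : MvPolynomial (DVar n M) R) (u : DVar n M) : Prop :=
  u ∈ f.vars ∧ ∀ v ∈ f.vars, v ≠ u → lt v u

/-- `f` lies in (the image of) `R`, i.e. is a constant polynomial. -/
def IsConst {R : Type} [CommRing R] {n M : ℕ} (f : MvPolynomial (DVar n M) R) : Prop :=
  ∃ r : R, f = C r

/-- `g` is reduced with respect to `f`: `g` contains no `δ`-transform of the leader of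
`f`, and every `σ`-transform of the leader of `f` occurs in `g` with degree `< deg f`. -/
def ReducedWrt {R : Type} [CommRing R] {n M : ℕ} (lt : DVar n M → DVar n M → Prop)
    (σset : Finset (Fin M)) (g f : MvPolynomial (DVar n M) R) : Prop :=
  ∀ u : DVar n M, IsLeader lt f u →
    (∀ φ : Fin M → ℕ, IsDeltaExp σset φ → shiftVar u φ ∉ g.vars) ∧
    (∀ φ : Fin M → ℕ, IsSigmaExp σset φ →
      degreeOf (shiftVar u φ) g < degreeOf u f)

/-- `g` is reduced with respect to every element of `A`. -/
def ReducedWrtSet {R : Type} [CommRing R] {n M : ℕ} (lt : DVar n M → DVar n M → Prop)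
    (σset : Finset (Fin M)) (g : MvPolynomial (DVar n M) R)
    (A : Set (MvPolynomial (DVar n M) R)) : Prop :=
  ∀ f ∈ A, ReducedWrt lt σset g f

/-- `A` is autoreduced: no element is constant and any two distinct elements are reduced
with respect to each other. -/
def Autoreduced {R : Type} [CommRing R] {n M : ℕ} (lt : DVar n M → DVar n M → Prop)
    (σset : Finset (Fin M)) (A : Set (MvPolynomial (DVar n M) R)) : Prop :=
  (∀ f ∈ A, ¬ IsConst f) ∧
  ∀ f ∈ A, ∀ g ∈ A, f ≠ g → ReducedWrt lt σset g f

/-- `rk f < rk g`: the leader of `f` is below that of `g`, or they coincide and the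
leading degree of `f` is smaller. -/
def RkLt {R : Type} [CommRing R] {n M : ℕ} (lt : DVar n M → DVar n M → Prop)
    (f g : MvPolynomial (DVar n M) R) : Prop :=
  ∃ uf ug, IsLeader lt f uf ∧ IsLeader lt g ug ∧
    (lt uf ug ∨ (uf = ug ∧ degreeOf uf f < degreeOf ug g))

/-- `rk f = rk g`: same leader and same leading degree. -/
def RkEq {R : Type} [CommRing R] {n M : ℕ} (lt : DVar n M → DVar n M → Prop)
    (f g : MvPolynomial (DVar n M) R) : Prop :=
  ∃ uf ug, IsLeader lt f uf ∧ IsLeader lt g ug ∧ uf = ug ∧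
    degreeOf uf f = degreeOf ug g

/-- `rk f ≤ rk g` (with constants of lowest rank). -/
def RkLe {R : Type} [CommRing R] {n M : ℕ} (lt : DVar n M → DVar n M → Prop)
    (f g : MvPolynomial (DVar n M) R) : Prop :=
  IsConst f ∨ RkLt lt f g ∨ RkEq lt f g

/-- `lt` is a ranking of the variables, with `σ`-operators `σset` and operator ranks `ν`. -/
structure IsRanking {n M : ℕ} (lt : DVar n M → DVar n M → Prop)
    (σset : Finset (Fin M)) (ν : Fin M → ℕ) : Prop where
  trichot : ∀ u v, lt u v ∨ u = v ∨ lt v u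
  irrefl : ∀ u, ¬ lt u u
  trans : ∀ u v w, lt u v → lt v w → lt u w
  wf : WellFounded lt
  lt_op : ∀ (u : DVar n M) (k : Fin M), lt u (shiftVar u (Pi.single k 1))
  mono : ∀ (u v : DVar n M) (k : Fin M), lt u v →
    lt (shiftVar u (Pi.single k 1)) (shiftVar v (Pi.single k 1))
  op_ord : ∀ (u : DVar n M) (k k' : Fin M), ν k < ν k' →
    lt (shiftVar u (Pi.single k 1)) (shiftVar u (Pi.single k' 1))
  nu_sigma : ∀ k ∈ σset, ν k = 0

/-- The coordinate operators of a `D*`-ring structure (with respect to a ranked basis of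
`D`) on a commutative `K`-algebra `A`: operators `δ k`, the subset `σset` of associated
endomorphisms, the map `fac` sending each operator to the associated endomorphism of its
local factor, operator ranks `ν`, and structure constants `α`, subject to additivity,
`K`-linearity, pairwise commutativity, multiplicativity and injectivity of the associated
endomorphisms, and the twisted Leibniz rule of the ranked basis. -/
structure DStarOps (K : Type) [Field K] (A : Type) [CommRing A] [Algebra K A]
    (M : ℕ) where
  δ : Fin M → A → A
  σset : Finset (Fin M)
  fac : Fin M → Fin M
  ν : Fin M → ℕ
  α : Fin M → Fin M → Fin M → K
  map_add : ∀ (k : Fin M) (a b : A), δ k (a + b) = δ k a + δ k b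
  map_smul : ∀ (k : Fin M) (c : K) (a : A), δ k (c • a) = c • δ k a
  comm : ∀ (k l : Fin M) (a : A), δ k (δ l a) = δ l (δ k a)
  fac_mem : ∀ k, fac k ∈ σset
  fac_sigma : ∀ k ∈ σset, fac k = k
  sigma_one : ∀ k ∈ σset, δ k 1 = 1
  sigma_mul : ∀ k ∈ σset, ∀ a b : A, δ k (a * b) = δ k a * δ k b
  sigma_inj : ∀ k ∈ σset, Function.Injective (δ k)
  nu_sigma : ∀ k ∈ σset, ν k = 0
  nu_delta : ∀ k ∉ σset, 1 ≤ ν k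
  prod_rule : ∀ k ∉ σset, ∀ a b : A,
    δ k (a * b) = δ k a * δ (fac k) b + δ (fac k) a * δ k b +
      ∑ pq ∈ Finset.univ.filter
          (fun pq : Fin M × Fin M =>
            pq.1 ∉ σset ∧ pq.2 ∉ σset ∧ fac pq.1 = fac k ∧ fac pq.2 = fac k ∧
              ν pq.1 + ν pq.2 ≤ ν k),
        α k pq.1 pq.2 • (δ pq.1 a * δ pq.2 b)

variable {K : Type} [Field K] {A : Type} [CommRing A] [Algebra K A] {M : ℕ}

/-- Applying a composite of the operators along a list of indices. -/
def applyWord (op : DStarOps K A M) (w : List (Fin M)) (a : A) : A :=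
  w.foldr (fun k x => op.δ k x) a

/-- `b` is a `σ`-transform of `a`: the image of `a` under a composition of the
associated endomorphisms. -/
def IsSigmaTransform (op : DStarOps K A M) (a b : A) : Prop :=
  ∃ w : List (Fin M), (∀ k ∈ w, k ∈ op.σset) ∧ b = applyWord op w a

/-- An ideal closed under all the operators (a `D`-ideal). -/
def IsDIdeal (op : DStarOps K A M) (I : Ideal A) : Prop :=
  ∀ k : Fin M, ∀ a ∈ I, op.δ k a ∈ I

/-- A reflexive ideal: `a·σᵢ(a) ∈ I` implies `a ∈ I`. -/
def IsReflexive (op : DStarOps K A M) (I : Ideal A) : Prop :=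
  ∀ k ∈ op.σset, ∀ a : A, a * op.δ k a ∈ I → a ∈ I

/-- A perfect `D`-ideal: a radical, reflexive `D`-ideal. -/
def IsPerfectDIdeal (op : DStarOps K A M) (I : Ideal A) : Prop :=
  IsDIdeal op I ∧ IsReflexive op I ∧ I.IsRadical

/-- Membership in the `D`-ideal `[S]_D` generated by `S`. -/
def InDIdealGen (op : DStarOps K A M) (S : Set A) (a : A) : Prop :=
  ∀ I : Ideal A, S ⊆ I → IsDIdeal op I → a ∈ I

/-- Membership in the reflexive `D`-ideal `⟨S⟩_D` generated by `S`. -/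
def InReflexiveDIdealGen (op : DStarOps K A M) (S : Set A) (a : A) : Prop :=
  ∀ I : Ideal A, S ⊆ I → IsDIdeal op I → IsReflexive op I → a ∈ I

/-- The initial of `f` with respect to the variable `u`: the leading coefficient of `f`
viewed as a univariate polynomial in `u`. -/
noncomputable def initialOf {R : Type} [CommRing R] {n M : ℕ} (u : DVar n M)
    (f : MvPolynomial (DVar n M) R) : MvPolynomial (DVar n M) R :=
  ∑ d ∈ f.support.filter (fun d => d u = degreeOf u f),
    monomial (d.erase u) (coeff d f)


/-! ### Auxiliary development for the reduction lemma -/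

namespace DRed

open MvPolynomial

section Poly
variable {S : Type} [CommRing S] {n M : ℕ}

theorem mem_vars_iff_deg {p : MvPolynomial (DVar n M) S} {v : DVar n M} :
    v ∈ p.vars ↔ degreeOf v p ≠ 0 := by
  classical
  rw [degreeOf_eq_sup, mem_vars]
  constructor
  · rintro ⟨d, hd, hv⟩ h0
    have hle := Finset.le_sup (f := fun m : DVar n M →₀ ℕ => m v) hd
    rw [h0, Nat.le_zero] at hle
    exact (Finsupp.mem_support_iff.1 hv) hle
  · intro h
    by_contra hc
    push_neg at hc
    refine h (Nat.le_zero.1 (Finset.sup_le fun d hd => ?_))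
    rw [Nat.le_zero]
    by_contra h2
    exact hc d hd (Finsupp.mem_support_iff.2 h2)

theorem not_mem_vars_deg {p : MvPolynomial (DVar n M) S} {v : DVar n M}
    (h : v ∉ p.vars) : degreeOf v p = 0 := by
  by_contra hc; exact h (mem_vars_iff_deg.2 hc)

theorem varsX_subset (v : DVar n M) : (X v : MvPolynomial (DVar n M) S).vars ⊆ {v} := by
  intro x hx
  rw [mem_vars] at hx
  obtain ⟨d, hd, hxd⟩ := hx
  rw [X] at hd
  have hd' := support_monomial_subset hd
  rw [Finset.mem_singleton] at hd'
  subst hd'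
  have := Finsupp.support_single_subset hxd
  simpa using this

theorem varsXpow_subset (v : DVar n M) (m : ℕ) :
    ((X v : MvPolynomial (DVar n M) S) ^ m).vars ⊆ {v} := by
  intro x hx
  rw [mem_vars] at hx
  obtain ⟨d, hd, hxd⟩ := hx
  rw [X_pow_eq_monomial] at hd
  have hd' := support_monomial_subset hd
  rw [Finset.mem_singleton] at hd'
  subst hd'
  have := Finsupp.support_single_subset hxd
  simpa using this

theorem degreeOf_X_pow_le (v w : DVar n M) (m : ℕ) :
    degreeOf w ((X v : MvPolynomial (DVar n M) S) ^ m) ≤ if w = v then m else 0 := by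
  rw [degreeOf_le_iff]
  intro d hd
  rw [X_pow_eq_monomial] at hd
  have hd' := support_monomial_subset hd
  rw [Finset.mem_singleton] at hd'
  subst hd'
  rw [Finsupp.single_apply]
  by_cases h : w = v
  · simp [h]
  · rw [if_neg h, Nat.le_zero, ite_eq_right_iff]
    intro h'
    exact absurd h'.symm h

theorem degreeOf_map_le {S' : Type} [CommRing S'] (τ : S →+* S') (v : DVar n M)
    (p : MvPolynomial (DVar n M) S) :
    degreeOf v (map τ p) ≤ degreeOf v p := by
  rw [degreeOf_le_iff]
  intro m hm
  exact monomial_le_degreeOf v (support_map_subset _ _ hm)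

theorem eq_C_of_vars_empty {p : MvPolynomial (DVar n M) S} (h : p.vars = ∅) :
    p = C (coeff 0 p) := by
  classical
  have hsupp : ∀ d ∈ p.support, d = 0 := by
    intro d hd
    by_contra hd0
    obtain ⟨x, hx⟩ := Finsupp.support_nonempty_iff.2 hd0
    have hxv : x ∈ p.vars := (mem_vars x).2 ⟨d, hd, hx⟩
    rw [h] at hxv
    exact absurd hxv (Finset.notMem_empty x)
  ext m
  rw [coeff_C]
  split
  · next heq => subst heq; rfl
  · next hne =>
      by_contra hc
      have hm : m ∈ p.support := MvPolynomial.mem_support_iff.2 hc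
      exact hne ((hsupp m hm).symm)

theorem vars_pderiv (x : DVar n M) (p : MvPolynomial (DVar n M) S) :
    (pderiv x p).vars ⊆ p.vars := by
  classical
  intro y hy
  have hrw : pderiv x p = ∑ d ∈ p.support, pderiv x (monomial d (coeff d p)) := by
    conv_lhs => rw [(support_sum_monomial_coeff p).symm]
    exact map_sum (pderiv x) _ _
  rw [hrw] at hy
  have := vars_sum_subset (t := p.support)
      (φ := fun d => pderiv x (monomial d (coeff d p))) hy
  rw [Finset.mem_biUnion] at this
  obtain ⟨d, hd, hyd⟩ := this
  simp only [pderiv_monomial, mem_vars] at hyd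
  obtain ⟨d', hd', hyd'⟩ := hyd
  have hd'' := support_monomial_subset hd'
  rw [Finset.mem_singleton] at hd''
  subst hd''
  rw [mem_vars]
  refine ⟨d, hd, ?_⟩
  rw [Finsupp.mem_support_iff] at hyd' ⊢
  intro h0
  apply hyd'
  rw [Finsupp.tsub_apply, h0]
  omega

omit [Field K] [CommRing A] [Algebra K A] in
theorem vars_smul_subset {K' : Type} [Field K'] [Algebra K' S] (c' : K')
    (p : MvPolynomial (DVar n M) S) : (c' • p).vars ⊆ p.vars := by
  intro y hy
  rw [mem_vars] at hy ⊢
  obtain ⟨d, hd, hyd⟩ := hy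
  exact ⟨d, support_smul hd, hyd⟩

theorem varsMulX {p : MvPolynomial (DVar n M) S} (hp : p ≠ 0) (v : DVar n M) :
    (p * X v).vars = insert v p.vars := by
  classical
  ext x
  simp only [mem_vars, Finset.mem_insert]
  constructor
  · rintro ⟨d, hd, hxd⟩
    rw [support_mul_X, Finset.mem_map] at hd
    obtain ⟨d', hd', rfl⟩ := hd
    simp only [Finsupp.mem_support_iff, Function.Embedding.coeFn_mk,
      addRightEmbedding_apply, Finsupp.add_apply, Finsupp.single_apply] at hxd
    by_cases hxv : x = v
    · exact Or.inl hxv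
    · refine Or.inr ⟨d', hd', Finsupp.mem_support_iff.2 ?_⟩
      intro h0
      rw [h0, if_neg (fun h : v = x => hxv h.symm)] at hxd
      exact hxd (by simp)
  · intro hx
    have hps : p.support.Nonempty := Finset.nonempty_iff_ne_empty.2 (mt support_eq_empty.1 hp)
    rcases hx with rfl | ⟨d, hd, hxd⟩
    · obtain ⟨d, hd⟩ := hps
      refine ⟨d + Finsupp.single x 1, ?_, ?_⟩
      · rw [support_mul_X, Finset.mem_map]
        exact ⟨d, hd, rfl⟩
      · rw [Finsupp.mem_support_iff, Finsupp.add_apply, Finsupp.single_apply]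
        simp
    · refine ⟨d + Finsupp.single v 1, ?_, ?_⟩
      · rw [support_mul_X, Finset.mem_map]
        exact ⟨d, hd, rfl⟩
      · rw [Finsupp.mem_support_iff, Finsupp.add_apply]
        rw [Finsupp.mem_support_iff] at hxd
        intro h0
        exact hxd (by omega)

theorem vars_monomial_subset {d : DVar n M →₀ ℕ} {c : S} :
    (monomial d c).vars ⊆ d.support := by
  intro x hx
  rw [mem_vars] at hx
  obtain ⟨d', hd', hxd⟩ := hx
  have := support_monomial_subset hd'
  rw [Finset.mem_singleton] at this
  subst this
  exact hxd

end Poly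

end DRed


namespace DRed

open MvPolynomial

section Order
variable {n M : ℕ} {lt : DVar n M → DVar n M → Prop} {σs : Finset (Fin M)} {ν : Fin M → ℕ}

theorem asymm_of (hr : IsRanking lt σs ν) {a b : DVar n M} (h : lt a b) : ¬ lt b a :=
  fun h' => hr.irrefl a (hr.trans _ _ _ h h')

theorem ne_of_lt' (hr : IsRanking lt σs ν) {a b : DVar n M} (h : lt a b) : a ≠ b :=
  fun e => hr.irrefl a (e ▸ h)

theorem shiftVar_comp (u : DVar n M) (φ ψ : Fin M → ℕ) :
    shiftVar (shiftVar u φ) ψ = shiftVar u (fun l => φ l + ψ l) := by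
  unfold shiftVar
  refine Prod.ext rfl ?_
  funext l
  exact add_assoc _ _ _

theorem shiftVar_zero' (u : DVar n M) : shiftVar u (fun _ => 0) = u := by
  unfold shiftVar
  refine Prod.ext rfl ?_
  funext l
  exact add_zero _

theorem shiftVar_inj (φ : Fin M → ℕ) :
    Function.Injective (fun x : DVar n M => shiftVar x φ) := by
  intro x y h
  unfold shiftVar at h
  have h1 := congrArg Prod.fst h
  have h2 := congrArg Prod.snd h
  simp only at h1 h2
  refine Prod.ext h1 ?_
  funext l
  have := congrFun h2 l
  simpa using this

/-- The multi-exponent of a word of operators. -/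
def cntW (w : List (Fin M)) : Fin M → ℕ := fun k => w.count k

theorem shiftVar_cntW_nil (u : DVar n M) : shiftVar u (cntW ([] : List (Fin M))) = u := by
  have : cntW ([] : List (Fin M)) = fun _ => 0 := by
    funext k; simp [cntW]
  rw [this, shiftVar_zero']

theorem shiftVar_cntW_cons (k : Fin M) (w : List (Fin M)) (x : DVar n M) :
    shiftVar x (cntW (k :: w)) = shiftVar (shiftVar x (cntW w)) (Pi.single k 1) := by
  rw [shiftVar_comp]
  congr 1
  funext l
  simp only [cntW, List.count_cons, Pi.single_apply]
  by_cases hlk : l = k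
  · subst hlk; simp
  · have hkl : ¬ k = l := fun h => hlk h.symm
    simp [hlk, hkl]

theorem mono_word (hr : IsRanking lt σs ν) (w : List (Fin M)) {x y : DVar n M} (h : lt x y) :
    lt (shiftVar x (cntW w)) (shiftVar y (cntW w)) := by
  induction w with
  | nil => rw [shiftVar_cntW_nil, shiftVar_cntW_nil]; exact h
  | cons k w ih =>
      rw [shiftVar_cntW_cons, shiftVar_cntW_cons]
      exact hr.mono _ _ _ ih

theorem mono_word_le (hr : IsRanking lt σs ν) (w : List (Fin M)) {x y : DVar n M}
    (h : lt x y ∨ x = y) :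
    lt (shiftVar x (cntW w)) (shiftVar y (cntW w)) ∨
      shiftVar x (cntW w) = shiftVar y (cntW w) := by
  rcases h with h | rfl
  · exact Or.inl (mono_word hr w h)
  · exact Or.inr rfl

theorem exists_max (hr : IsRanking lt σs ν) (S : Finset (DVar n M)) (hS : S.Nonempty) :
    ∃ u ∈ S, ∀ x ∈ S, x ≠ u → lt x u := by
  classical
  induction S using Finset.induction_on with
  | empty => exact absurd hS (by simp)
  | @insert a s ha ih =>
      by_cases hs : s.Nonempty
      · obtain ⟨u, hu, hmax⟩ := ih hs
        rcases hr.trichot a u with hau | rfl | hua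
        · refine ⟨u, Finset.mem_insert_of_mem hu, ?_⟩
          intro x hx hxu
          rcases Finset.mem_insert.1 hx with rfl | hxs
          · exact hau
          · exact hmax x hxs hxu
        · refine ⟨a, Finset.mem_insert_self _ _, ?_⟩
          intro x hx hxa
          rcases Finset.mem_insert.1 hx with rfl | hxs
          · exact absurd rfl hxa
          · exact hmax x hxs hxa
        · refine ⟨a, Finset.mem_insert_self _ _, ?_⟩
          intro x hx hxa
          rcases Finset.mem_insert.1 hx with rfl | hxs
          · exact absurd rfl hxa
          · rcases hr.trichot x u with h1 | rfl | h1
            · exact hr.trans _ _ _ h1 hua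
            · exact hua
            · exact hr.trans _ _ _ (hmax x hxs (ne_of_lt' hr h1).symm) hua
      · have hse : s = ∅ := Finset.not_nonempty_iff_eq_empty.1 hs
        subst hse
        refine ⟨a, Finset.mem_insert_self _ _, ?_⟩
        intro x hx hxa
        rcases Finset.mem_insert.1 hx with rfl | hxs
        · exact absurd rfl hxa
        · exact absurd hxs (Finset.notMem_empty x)

variable {S : Type} [CommRing S]

theorem exists_leader (hr : IsRanking lt σs ν) {p : MvPolynomial (DVar n M) S}
    (hp : ¬ IsConst p) : ∃ u, IsLeader lt p u := by
  have hv : p.vars.Nonempty := by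
    rcases Finset.eq_empty_or_nonempty p.vars with he | hne
    · exact absurd ⟨coeff 0 p, eq_C_of_vars_empty he⟩ hp
    · exact hne
  obtain ⟨u, hu, hmax⟩ := exists_max hr p.vars hv
  exact ⟨u, hu, hmax⟩

theorem leader_unique (hr : IsRanking lt σs ν) {p : MvPolynomial (DVar n M) S}
    {u u' : DVar n M} (h : IsLeader lt p u) (h' : IsLeader lt p u') : u = u' := by
  by_contra hne
  exact hr.irrefl u (hr.trans _ _ _ (h'.2 u h.1 hne) (h.2 u' h'.1 (Ne.symm hne)))

theorem IsLeader.deg_pos {p : MvPolynomial (DVar n M) S} {u : DVar n M}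
    (h : IsLeader lt p u) : 0 < degreeOf u p :=
  Nat.pos_of_ne_zero (mem_vars_iff_deg.1 h.1)

end Order

end DRed


namespace DRed

open MvPolynomial

section Split
variable {S : Type} [CommRing S] {n M : ℕ}

/-- The part of `p` of degree `< degreeOf v p` in `v`. -/
noncomputable def tailOf (v : DVar n M) (p : MvPolynomial (DVar n M) S) :
    MvPolynomial (DVar n M) S :=
  ∑ d ∈ p.support.filter (fun d => ¬ d v = degreeOf v p), monomial d (coeff d p)

theorem initial_mul_add_tail (v : DVar n M) (p : MvPolynomial (DVar n M) S) :
    initialOf v p * X v ^ degreeOf v p + tailOf v p = p := by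
  classical
  have h1 : initialOf v p * X v ^ degreeOf v p
      = ∑ d ∈ p.support.filter (fun d => d v = degreeOf v p), monomial d (coeff d p) := by
    unfold initialOf
    rw [X_pow_eq_monomial, Finset.sum_mul]
    refine Finset.sum_congr rfl ?_
    intro d hd
    rw [Finset.mem_filter] at hd
    rw [monomial_mul, mul_one, ← hd.2, Finsupp.erase_add_single]
  rw [h1]
  unfold tailOf
  rw [Finset.sum_filter_add_sum_filter_not]
  exact support_sum_monomial_coeff p

theorem mem_support_tail {v : DVar n M} {p : MvPolynomial (DVar n M) S}
    {d : DVar n M →₀ ℕ} (hd : d ∈ (tailOf v p).support) :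
    d ∈ p.support ∧ d v ≠ degreeOf v p := by
  classical
  unfold tailOf at hd
  obtain ⟨d', hd', hdd⟩ := Finset.mem_biUnion.1 (support_sum hd)
  have := support_monomial_subset hdd
  rw [Finset.mem_singleton] at this
  subst this
  rw [Finset.mem_filter] at hd'
  exact ⟨hd'.1, hd'.2⟩

theorem deg_tail_le (v w : DVar n M) (p : MvPolynomial (DVar n M) S) :
    degreeOf w (tailOf v p) ≤ degreeOf w p := by
  rw [degreeOf_le_iff]
  intro d hd
  exact monomial_le_degreeOf w (mem_support_tail hd).1

theorem deg_tail_lt {v : DVar n M} {p : MvPolynomial (DVar n M) S}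
    (h : 0 < degreeOf v p) : degreeOf v (tailOf v p) < degreeOf v p := by
  rw [degreeOf_lt_iff h]
  intro d hd
  obtain ⟨hd1, hd2⟩ := mem_support_tail hd
  exact lt_of_le_of_ne (monomial_le_degreeOf v hd1) hd2

theorem vars_tail_subset (v : DVar n M) (p : MvPolynomial (DVar n M) S) :
    (tailOf v p).vars ⊆ p.vars := by
  intro x hx
  rw [mem_vars] at hx ⊢
  obtain ⟨d, hd, hxd⟩ := hx
  exact ⟨d, (mem_support_tail hd).1, hxd⟩

theorem mem_support_initial {v : DVar n M} {p : MvPolynomial (DVar n M) S}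
    {d' : DVar n M →₀ ℕ} (hd : d' ∈ (initialOf v p).support) :
    ∃ d ∈ p.support, d v = degreeOf v p ∧ d' = d.erase v := by
  classical
  unfold initialOf at hd
  obtain ⟨d, hdm, hdd⟩ := Finset.mem_biUnion.1 (support_sum hd)
  have := support_monomial_subset hdd
  rw [Finset.mem_singleton] at this
  subst this
  rw [Finset.mem_filter] at hdm
  exact ⟨d, hdm.1, hdm.2, rfl⟩

theorem vars_initial {v : DVar n M} {p : MvPolynomial (DVar n M) S} :
    ∀ x ∈ (initialOf v p).vars, x ≠ v ∧ x ∈ p.vars := by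
  classical
  intro x hx
  rw [mem_vars] at hx
  obtain ⟨d', hd', hxd⟩ := hx
  obtain ⟨d, hd, _, rfl⟩ := mem_support_initial hd'
  rw [Finsupp.support_erase, Finset.mem_erase] at hxd
  exact ⟨hxd.1, (mem_vars x).2 ⟨d, hd, hxd.2⟩⟩

theorem deg_initial_le (v w : DVar n M) (p : MvPolynomial (DVar n M) S) :
    degreeOf w (initialOf v p) ≤ degreeOf w p := by
  classical
  rw [degreeOf_le_iff]
  intro d' hd'
  obtain ⟨d, hd, _, rfl⟩ := mem_support_initial hd'
  refine le_trans ?_ (monomial_le_degreeOf w hd)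
  rw [Finsupp.erase_apply]
  split <;> simp

end Split

end DRed


namespace DRed

open MvPolynomial

section Ops
variable {K R : Type} [Field K] [CommRing R] [Algebra K R] {n M : ℕ}
variable (op : DStarOps K (MvPolynomial (DVar n M) R) M)

theorem delta_zero (k : Fin M) : op.δ k 0 = 0 := by
  have h := op.map_add k 0 0
  rw [add_zero] at h
  exact left_eq_add.1 h

/-- `op.δ k` as an additive monoid hom. -/
noncomputable def dAdd (k : Fin M) : MvPolynomial (DVar n M) R →+ MvPolynomial (DVar n M) R :=
  AddMonoidHom.mk' (op.δ k) (op.map_add k)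

theorem delta_sum {ι : Type} (k : Fin M) (s : Finset ι) (f : ι → MvPolynomial (DVar n M) R) :
    op.δ k (∑ i ∈ s, f i) = ∑ i ∈ s, op.δ k (f i) :=
  map_sum (dAdd op k) f s

theorem delta_sub (k : Fin M) (a b : MvPolynomial (DVar n M) R) :
    op.δ k (a - b) = op.δ k a - op.δ k b :=
  map_sub (dAdd op k) a b

/-- The action of `op.δ k` on constants. -/
noncomputable def cmap (k : Fin M) (r : R) : R := coeff 0 (op.δ k (C r))

theorem delta_C (hconst : ∀ (k : Fin M) (r : R), ∃ r' : R, op.δ k (C r) = C r') (k : Fin M) (r : R) :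
    op.δ k (C r) = C (cmap op k r) := by
  obtain ⟨r', h⟩ := hconst k r
  rw [h]
  unfold cmap
  rw [h]
  congr 1
  simp

/-- `op.δ k` for `k ∈ σset` as a ring hom. -/
noncomputable def sigmaHom (k : Fin M) (hk : k ∈ op.σset) :
    MvPolynomial (DVar n M) R →+* MvPolynomial (DVar n M) R where
  toFun := op.δ k
  map_one' := op.sigma_one k hk
  map_mul' := op.sigma_mul k hk
  map_zero' := delta_zero op k
  map_add' := op.map_add k

/-- The action of `op.δ k` on coefficients as a ring hom, for `k ∈ σset`. -/
noncomputable def cHom (hconst : ∀ (k : Fin M) (r : R), ∃ r' : R, op.δ k (C r) = C r')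
    (k : Fin M) (hk : k ∈ op.σset) : R →+* R where
  toFun := cmap op k
  map_one' := by
    apply C_injective (DVar n M) R
    show C (cmap op k 1) = C 1
    rw [← delta_C op hconst, C_1, op.sigma_one k hk]
  map_mul' := by
    intro r s
    apply C_injective (DVar n M) R
    show C (cmap op k (r * s)) = C (cmap op k r * cmap op k s)
    rw [C_mul, ← delta_C op hconst, ← delta_C op hconst, ← delta_C op hconst,
      ← op.sigma_mul k hk, ← C_mul]
  map_zero' := by
    apply C_injective (DVar n M) R
    show C (cmap op k 0) = C 0
    rw [← delta_C op hconst, C_0, delta_zero]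
  map_add' := by
    intro r s
    apply C_injective (DVar n M) R
    show C (cmap op k (r + s)) = C (cmap op k r + cmap op k s)
    rw [C_add, ← delta_C op hconst, ← delta_C op hconst, ← delta_C op hconst,
      ← op.map_add k, ← C_add]

theorem sigma_eq_rename (hconst : ∀ (k : Fin M) (r : R), ∃ r' : R, op.δ k (C r) = C r')
    (hvar : ∀ (k : Fin M) (u : DVar n M),
      op.δ k (X u) = X (shiftVar u (Pi.single k 1))) (k : Fin M) (hk : k ∈ op.σset) (p : MvPolynomial (DVar n M) R) :
    op.δ k p = map (cHom op hconst k hk)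
      (rename (fun x : DVar n M => shiftVar x (Pi.single k 1)) p) := by
  have hext : sigmaHom op k hk
      = (MvPolynomial.map (cHom op hconst k hk)).comp
          ((rename (fun x : DVar n M => shiftVar x (Pi.single k 1))).toRingHom) := by
    apply ringHom_ext
    · intro r
      simp only [RingHom.comp_apply, AlgHom.toRingHom_eq_coe, RingHom.coe_coe, rename_C, map_C]
      show op.δ k (C r) = C (cHom op hconst k hk r)
      exact delta_C op hconst k r
    · intro x
      simp only [RingHom.comp_apply, AlgHom.toRingHom_eq_coe, RingHom.coe_coe, rename_X, map_X]
      exact hvar k x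
  exact RingHom.congr_fun hext p

theorem vars_delta_sigma (hconst : ∀ (k : Fin M) (r : R), ∃ r' : R, op.δ k (C r) = C r')
    (hvar : ∀ (k : Fin M) (u : DVar n M),
      op.δ k (X u) = X (shiftVar u (Pi.single k 1))) (k : Fin M) (hk : k ∈ op.σset) (p : MvPolynomial (DVar n M) R) :
    (op.δ k p).vars ⊆ p.vars.image (fun x => shiftVar x (Pi.single k 1)) := by
  classical
  rw [sigma_eq_rename op hconst hvar k hk]
  exact fun y hy => vars_rename _ _ (vars_map _ _ hy)

theorem deg_delta_sigma (hconst : ∀ (k : Fin M) (r : R), ∃ r' : R, op.δ k (C r) = C r')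
    (hvar : ∀ (k : Fin M) (u : DVar n M),
      op.δ k (X u) = X (shiftVar u (Pi.single k 1))) (k : Fin M) (hk : k ∈ op.σset) (x : DVar n M)
    (p : MvPolynomial (DVar n M) R) :
    degreeOf (shiftVar x (Pi.single k 1)) (op.δ k p) ≤ degreeOf x p := by
  rw [sigma_eq_rename op hconst hvar k hk]
  refine le_trans (degreeOf_map_le _ _ _) ?_
  rw [degreeOf_rename_of_injective (shiftVar_inj _) x]

theorem applyWord_cons (k : Fin M) (w : List (Fin M)) (a : MvPolynomial (DVar n M) R) :
    applyWord op (k :: w) a = op.δ k (applyWord op w a) := rfl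

theorem applyWord_X (hvar : ∀ (k : Fin M) (u : DVar n M),
      op.δ k (X u) = X (shiftVar u (Pi.single k 1))) (w : List (Fin M)) (x : DVar n M) :
    applyWord op w (X x) = X (shiftVar x (cntW w)) := by
  induction w with
  | nil => rw [shiftVar_cntW_nil]; rfl
  | cons k w ih =>
      rw [applyWord_cons, ih, hvar, shiftVar_cntW_cons]

theorem applyWord_mul (w : List (Fin M)) (hw : ∀ k ∈ w, k ∈ op.σset)
    (a b : MvPolynomial (DVar n M) R) :
    applyWord op w (a * b) = applyWord op w a * applyWord op w b := by
  induction w with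
  | nil => rfl
  | cons k w ih =>
      rw [applyWord_cons, applyWord_cons, applyWord_cons,
        ih (fun j hj => hw j (List.mem_cons_of_mem _ hj))]
      exact op.sigma_mul k (hw k (List.mem_cons_self)) _ _

theorem applyWord_pow (w : List (Fin M)) (hw : ∀ k ∈ w, k ∈ op.σset)
    (a : MvPolynomial (DVar n M) R) (m : ℕ) :
    applyWord op w (a ^ m) = applyWord op w a ^ m := by
  induction m with
  | zero =>
      simp only [pow_zero]
      induction w with
      | nil => rfl
      | cons k w ih =>
          rw [applyWord_cons, ih (fun j hj => hw j (List.mem_cons_of_mem _ hj))]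
          exact op.sigma_one k (hw k (List.mem_cons_self))
  | succ m ih =>
      rw [pow_succ, applyWord_mul op w hw, ih, pow_succ]

theorem applyWord_add (w : List (Fin M)) (a b : MvPolynomial (DVar n M) R) :
    applyWord op w (a + b) = applyWord op w a + applyWord op w b := by
  induction w with
  | nil => rfl
  | cons k w ih => rw [applyWord_cons, applyWord_cons, applyWord_cons, ih, op.map_add]

theorem vars_applyWord_sigma (hconst : ∀ (k : Fin M) (r : R), ∃ r' : R, op.δ k (C r) = C r')
    (hvar : ∀ (k : Fin M) (u : DVar n M),
      op.δ k (X u) = X (shiftVar u (Pi.single k 1))) (w : List (Fin M)) (hw : ∀ k ∈ w, k ∈ op.σset)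
    (p : MvPolynomial (DVar n M) R) :
    ∀ y ∈ (applyWord op w p).vars, ∃ x ∈ p.vars, y = shiftVar x (cntW w) := by
  classical
  induction w with
  | nil =>
      intro y hy
      exact ⟨y, hy, (shiftVar_cntW_nil y).symm⟩
  | cons k w ih =>
      intro y hy
      rw [applyWord_cons] at hy
      have := vars_delta_sigma op hconst hvar k (hw k (List.mem_cons_self)) _ hy
      rw [Finset.mem_image] at this
      obtain ⟨z, hz, rfl⟩ := this
      obtain ⟨x, hx, rfl⟩ := ih (fun j hj => hw j (List.mem_cons_of_mem _ hj)) z hz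
      exact ⟨x, hx, (shiftVar_cntW_cons k w x).symm⟩

theorem deg_applyWord_sigma (hconst : ∀ (k : Fin M) (r : R), ∃ r' : R, op.δ k (C r) = C r')
    (hvar : ∀ (k : Fin M) (u : DVar n M),
      op.δ k (X u) = X (shiftVar u (Pi.single k 1))) (w : List (Fin M)) (hw : ∀ k ∈ w, k ∈ op.σset)
    (x : DVar n M) (p : MvPolynomial (DVar n M) R) :
    degreeOf (shiftVar x (cntW w)) (applyWord op w p) ≤ degreeOf x p := by
  induction w with
  | nil => rw [shiftVar_cntW_nil]; exact le_rfl
  | cons k w ih =>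
      rw [applyWord_cons, shiftVar_cntW_cons]
      exact le_trans
        (deg_delta_sigma op hconst hvar k (hw k (List.mem_cons_self)) _ _)
        (ih (fun j hj => hw j (List.mem_cons_of_mem _ hj)))

theorem applyWord_mem_dIdeal {I : Ideal (MvPolynomial (DVar n M) R)}
    (hI : IsDIdeal op I) (w : List (Fin M)) {a : MvPolynomial (DVar n M) R} (ha : a ∈ I) :
    applyWord op w a ∈ I := by
  induction w with
  | nil => exact ha
  | cons k w ih => exact hI k _ ih

theorem mem_vars_correction {k : Fin M} {a b : MvPolynomial (DVar n M) R} {y : DVar n M}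
    (hy : y ∈ (∑ pq ∈ Finset.univ.filter
          (fun pq : Fin M × Fin M =>
            pq.1 ∉ op.σset ∧ pq.2 ∉ op.σset ∧ op.fac pq.1 = op.fac k ∧ op.fac pq.2 = op.fac k ∧
              op.ν pq.1 + op.ν pq.2 ≤ op.ν k),
        op.α k pq.1 pq.2 • (op.δ pq.1 a * op.δ pq.2 b)).vars) :
    ∃ p₁ p₂ : Fin M, p₁ ∉ op.σset ∧ p₂ ∉ op.σset ∧ op.ν p₁ + op.ν p₂ ≤ op.ν k ∧
      (y ∈ (op.δ p₁ a).vars ∨ y ∈ (op.δ p₂ b).vars) := by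
  classical
  obtain ⟨pq, hpq, hy1⟩ := Finset.mem_biUnion.1 (vars_sum_subset _ _ hy)
  rw [Finset.mem_filter] at hpq
  obtain ⟨-, h1, h2, -, -, h5⟩ := hpq
  have hy2 := vars_smul_subset (K' := K) _ _ hy1
  rcases Finset.mem_union.1 (vars_mul _ _ hy2) with hy3 | hy3
  · exact ⟨pq.1, pq.2, h1, h2, h5, Or.inl hy3⟩
  · exact ⟨pq.1, pq.2, h1, h2, h5, Or.inr hy3⟩

/-- Variables occurring in `op.δ k q` are single shifts of variables of `q`,
either by `k` itself or by an operator of strictly smaller rank. -/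
theorem vars_delta (hconst : ∀ (k : Fin M) (r : R), ∃ r' : R, op.δ k (C r) = C r')
    (hvar : ∀ (k : Fin M) (u : DVar n M),
      op.δ k (X u) = X (shiftVar u (Pi.single k 1))) (k : Fin M) (q : MvPolynomial (DVar n M) R) :
    ∀ y ∈ (op.δ k q).vars, ∃ w ∈ q.vars, ∃ p : Fin M,
      (p = k ∨ op.ν p < op.ν k) ∧ y = shiftVar w (Pi.single p 1) := by
  classical
  suffices h : ∀ N : ℕ, ∀ k : Fin M, op.ν k ≤ N → ∀ q : MvPolynomial (DVar n M) R,
      ∀ y ∈ (op.δ k q).vars, ∃ w ∈ q.vars, ∃ p : Fin M,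
        (p = k ∨ op.ν p < op.ν k) ∧ y = shiftVar w (Pi.single p 1) by
    exact h (op.ν k) k le_rfl q
  intro N
  induction N with
  | zero =>
      intro k hk q y hy
      have hks : k ∈ op.σset := by
        by_contra hc
        have := op.nu_delta k hc
        omega
      have := vars_delta_sigma op hconst hvar k hks q hy
      rw [Finset.mem_image] at this
      obtain ⟨x, hx, rfl⟩ := this
      exact ⟨x, hx, k, Or.inl rfl, rfl⟩
  | succ N ih =>
      intro k hk
      by_cases hks : k ∈ op.σset
      · intro q y hy
        have := vars_delta_sigma op hconst hvar k hks q hy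
        rw [Finset.mem_image] at this
        obtain ⟨x, hx, rfl⟩ := this
        exact ⟨x, hx, k, Or.inl rfl, rfl⟩
      · have hν1 : 1 ≤ op.ν k := op.nu_delta k hks
        -- claim for a fixed polynomial
        set Cl : MvPolynomial (DVar n M) R → Prop := fun q =>
          ∀ y ∈ (op.δ k q).vars, ∃ w ∈ q.vars, ∃ p : Fin M,
            (p = k ∨ op.ν p < op.ν k) ∧ y = shiftVar w (Pi.single p 1) with hCl
        have mul_step : ∀ q, Cl q → ∀ v, Cl (q * X v) := by
          intro q hq v
          by_cases hq0 : q = 0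
          · subst hq0
            rw [hCl]
            intro y hy
            rw [zero_mul, delta_zero] at hy
            simp [vars_0] at hy
          · rw [hCl]
            intro y hy
            rw [op.prod_rule k hks q (X v)] at hy
            have hins : (q * X v).vars = insert v q.vars := varsMulX hq0 v
            rcases Finset.mem_union.1 (vars_add_subset _ _ hy) with hy1 | hy1
            · rcases Finset.mem_union.1 (vars_add_subset _ _ hy1) with hy2 | hy2
              · rcases Finset.mem_union.1 (vars_mul _ _ hy2) with hy3 | hy3
                · obtain ⟨w, hw, p, hp, rfl⟩ := hq y hy3
                  exact ⟨w, by rw [hins]; exact Finset.mem_insert_of_mem hw, p, hp, rfl⟩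
                · rw [hvar] at hy3
                  have := varsX_subset _ hy3
                  rw [Finset.mem_singleton] at this
                  subst this
                  refine ⟨v, by rw [hins]; exact Finset.mem_insert_self _ _,
                    op.fac k, Or.inr ?_, rfl⟩
                  rw [op.nu_sigma _ (op.fac_mem k)]
                  omega
              · rcases Finset.mem_union.1 (vars_mul _ _ hy2) with hy3 | hy3
                · obtain ⟨w, hw, p, hp, rfl⟩ :=
                    ih (op.fac k) (by rw [op.nu_sigma _ (op.fac_mem k)]; omega) q y hy3
                  refine ⟨w, by rw [hins]; exact Finset.mem_insert_of_mem hw, p, Or.inr ?_, rfl⟩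
                  rcases hp with rfl | hp
                  · rw [op.nu_sigma _ (op.fac_mem k)]; omega
                  · rw [op.nu_sigma _ (op.fac_mem k)] at hp; omega
                · rw [hvar] at hy3
                  have := varsX_subset _ hy3
                  rw [Finset.mem_singleton] at this
                  subst this
                  exact ⟨v, by rw [hins]; exact Finset.mem_insert_self _ _,
                    k, Or.inl rfl, rfl⟩
            · obtain ⟨p₁, p₂, hp₁, hp₂, hsum, hy3⟩ := mem_vars_correction op hy1
              have hν₁ : 1 ≤ op.ν p₁ := op.nu_delta _ hp₁
              have hν₂ : 1 ≤ op.ν p₂ := op.nu_delta _ hp₂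
              rcases hy3 with hy4 | hy4
              · obtain ⟨w, hw, p, hp, rfl⟩ := ih p₁ (by omega) q y hy4
                refine ⟨w, by rw [hins]; exact Finset.mem_insert_of_mem hw, p, Or.inr ?_, rfl⟩
                rcases hp with rfl | hp <;> omega
              · rw [hvar] at hy4
                have := varsX_subset _ hy4
                rw [Finset.mem_singleton] at this
                subst this
                exact ⟨v, by rw [hins]; exact Finset.mem_insert_self _ _,
                  p₂, Or.inr (by omega), rfl⟩
        have pow_step : ∀ (m : ℕ) (q), Cl q → ∀ v, Cl (q * X v ^ m) := by
          intro m
          induction m with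
          | zero => intro q hq v; rw [pow_zero, mul_one]; exact hq
          | succ m ihm =>
              intro q hq v
              have : q * X v ^ (m + 1) = q * X v ^ m * X v := by ring
              rw [this]
              exact mul_step _ (ihm q hq v) v
        have mono_cl : ∀ (d : DVar n M →₀ ℕ) (r : R), Cl (monomial d r) := by
          intro d
          induction d using Finsupp.induction with
          | zero =>
              intro r
              rw [hCl]
              intro y hy
              rw [monomial_zero', delta_C op hconst] at hy
              simp [vars_C] at hy
          | single_add a b f haf hb ihf =>
              intro r
              have heq : monomial (Finsupp.single a b + f) r = monomial f r * X a ^ b := by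
                rw [X_pow_eq_monomial, monomial_mul, mul_one, add_comm]
              rw [heq]
              exact pow_step b _ (ihf r) a
        intro q y hy
        have hq : op.δ k q = ∑ d ∈ q.support, op.δ k (monomial d (coeff d q)) := by
          conv_lhs => rw [(support_sum_monomial_coeff q).symm]
          exact delta_sum op k _ _
        rw [hq] at hy
        obtain ⟨d, hd, hyd⟩ := Finset.mem_biUnion.1 (vars_sum_subset _ _ hy)
        obtain ⟨w, hw, p, hp, rfl⟩ := mono_cl d (coeff d q) y hyd
        have hwd : w ∈ d.support := vars_monomial_subset hw
        exact ⟨w, (mem_vars w).2 ⟨d, hd, hwd⟩, p, hp, rfl⟩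

end Ops

end DRed


namespace DRed

open MvPolynomial

section TD
variable {K R : Type} [Field K] [CommRing R] [Algebra K R] {n M : ℕ}
variable (op : DStarOps K (MvPolynomial (DVar n M) R) M)

/-- Chain rule: applying a derivation-type operator to `q` yields the twisted total
differential plus an error term supported on shifts by lower-ranked operators. -/
theorem total_diff (hconst : ∀ (k : Fin M) (r : R), ∃ r' : R, op.δ k (C r) = C r')
    (hvar : ∀ (k : Fin M) (u : DVar n M),
      op.δ k (X u) = X (shiftVar u (Pi.single k 1)))
    (k : Fin M) (hks : k ∉ op.σset) (q : MvPolynomial (DVar n M) R) :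
    ∃ E, op.δ k q
        = (∑ x ∈ q.vars, op.δ (op.fac k) (pderiv x q) * X (shiftVar x (Pi.single k 1))) + E
      ∧ ∀ y ∈ E.vars, ∃ w ∈ q.vars, ∃ p : Fin M,
          op.ν p < op.ν k ∧ y = shiftVar w (Pi.single p 1) := by
  classical
  have hν1 : 1 ≤ op.ν k := op.nu_delta k hks
  have hfk : op.fac k ∈ op.σset := op.fac_mem k
  set TDcl : MvPolynomial (DVar n M) R → Prop := fun q =>
    ∃ E, op.δ k q
        = (∑ x ∈ q.vars, op.δ (op.fac k) (pderiv x q) * X (shiftVar x (Pi.single k 1))) + E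
      ∧ ∀ y ∈ E.vars, ∃ w ∈ q.vars, ∃ p : Fin M,
          op.ν p < op.ν k ∧ y = shiftVar w (Pi.single p 1) with hTD
  have mul_step : ∀ q, TDcl q → ∀ v, TDcl (q * X v) := by
    intro q hq v
    by_cases hq0 : q = 0
    · subst hq0
      rw [hTD, zero_mul]
      exact ⟨0, by rw [delta_zero]; simp [vars_0], by simp [vars_0]⟩
    obtain ⟨E, hE, hEb⟩ := hq
    have hins : (q * X v).vars = insert v q.vars := varsMulX hq0 v
    rw [hTD]
    refine ⟨E * op.δ (op.fac k) (X v) +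
        ∑ pq ∈ Finset.univ.filter
          (fun pq : Fin M × Fin M =>
            pq.1 ∉ op.σset ∧ pq.2 ∉ op.σset ∧ op.fac pq.1 = op.fac k ∧ op.fac pq.2 = op.fac k ∧
              op.ν pq.1 + op.ν pq.2 ≤ op.ν k),
          op.α k pq.1 pq.2 • (op.δ pq.1 q * op.δ pq.2 (X v)), ?_, ?_⟩
    · rw [op.prod_rule k hks q (X v), hE]
      have htarget : (∑ x ∈ (q * X v).vars, op.δ (op.fac k) (pderiv x (q * X v)) *
            X (shiftVar x (Pi.single k 1)))
          = (∑ x ∈ q.vars, op.δ (op.fac k) (pderiv x q) * op.δ (op.fac k) (X v)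
               * X (shiftVar x (Pi.single k 1)))
            + op.δ (op.fac k) q * op.δ k (X v) := by
        rw [hins]
        have hsplit : ∀ x ∈ insert v q.vars,
            op.δ (op.fac k) (pderiv x (q * X v)) * X (shiftVar x (Pi.single k 1))
              = op.δ (op.fac k) (pderiv x q) * op.δ (op.fac k) (X v)
                  * X (shiftVar x (Pi.single k 1))
                + op.δ (op.fac k) (q * pderiv x (X v)) * X (shiftVar x (Pi.single k 1)) := by
          intro x hx
          rw [pderiv_mul, op.map_add (op.fac k), add_mul, ← op.sigma_mul _ hfk]
        rw [Finset.sum_congr rfl hsplit, Finset.sum_add_distrib]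
        congr 1
        · by_cases hvq : v ∈ q.vars
          · rw [Finset.insert_eq_self.2 hvq]
          · rw [Finset.sum_insert hvq, pderiv_eq_zero_of_notMem_vars hvq, delta_zero,
              zero_mul, zero_mul, zero_add]
        · rw [Finset.sum_eq_single v]
          · rw [pderiv_X_self, mul_one, hvar k v]
          · intro x _ hxv
            rw [pderiv_X_of_ne hxv.symm, mul_zero, delta_zero, zero_mul]
          · intro hvm
            exact absurd (Finset.mem_insert_self _ _) hvm
      rw [htarget]
      have hA : (∑ x ∈ q.vars, op.δ (op.fac k) (pderiv x q) * X (shiftVar x (Pi.single k 1)))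
          * op.δ (op.fac k) (X v)
          = ∑ x ∈ q.vars, op.δ (op.fac k) (pderiv x q) * op.δ (op.fac k) (X v)
              * X (shiftVar x (Pi.single k 1)) := by
        rw [Finset.sum_mul]
        exact Finset.sum_congr rfl fun x _ => by ring
      rw [add_mul, hA]
      ring
    · intro y hy
      rcases Finset.mem_union.1 (vars_add_subset _ _ hy) with hy1 | hy1
      · rcases Finset.mem_union.1 (vars_mul _ _ hy1) with hy2 | hy2
        · obtain ⟨w, hw, p, hp, rfl⟩ := hEb y hy2
          exact ⟨w, by rw [hins]; exact Finset.mem_insert_of_mem hw, p, hp, rfl⟩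
        · rw [hvar] at hy2
          have := varsX_subset _ hy2
          rw [Finset.mem_singleton] at this
          subst this
          refine ⟨v, by rw [hins]; exact Finset.mem_insert_self _ _, op.fac k, ?_, rfl⟩
          rw [op.nu_sigma _ hfk]
          omega
      · obtain ⟨p₁, p₂, hp₁, hp₂, hsum, hy3⟩ := mem_vars_correction op hy1
        have hν₁ := op.nu_delta _ hp₁
        have hν₂ := op.nu_delta _ hp₂
        rcases hy3 with hy4 | hy4
        · obtain ⟨w, hw, p, hp, rfl⟩ := vars_delta op hconst hvar p₁ q y hy4
          refine ⟨w, by rw [hins]; exact Finset.mem_insert_of_mem hw, p, ?_, rfl⟩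
          rcases hp with rfl | hp <;> omega
        · rw [hvar] at hy4
          have := varsX_subset _ hy4
          rw [Finset.mem_singleton] at this
          subst this
          exact ⟨v, by rw [hins]; exact Finset.mem_insert_self _ _, p₂, by omega, rfl⟩
  have pow_step : ∀ (m : ℕ) (q), TDcl q → ∀ v, TDcl (q * X v ^ m) := by
    intro m
    induction m with
    | zero => intro q hq v; rw [pow_zero, mul_one]; exact hq
    | succ m ihm =>
        intro q hq v
        have hrw : q * X v ^ (m + 1) = q * X v ^ m * X v := by ring
        rw [hrw]
        exact mul_step _ (ihm q hq v) v
  have mono_cl : ∀ (d : DVar n M →₀ ℕ) (r : R), TDcl (monomial d r) := by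
    intro d
    induction d using Finsupp.induction with
    | zero =>
        intro r
        rw [hTD]
        refine ⟨op.δ k (C r), ?_, ?_⟩
        · rw [monomial_zero', vars_C]
          rw [Finset.sum_empty, zero_add]
        · rw [monomial_zero', delta_C op hconst]
          simp [vars_C]
    | single_add a b f haf hb ihf =>
        intro r
        have heq : monomial (Finsupp.single a b + f) r = monomial f r * X a ^ b := by
          rw [X_pow_eq_monomial, monomial_mul, mul_one, add_comm]
        rw [heq]
        exact pow_step b _ (ihf r) a
  -- assembly
  choose F hFeq hFb using fun d r => mono_cl d r
  refine ⟨∑ d ∈ q.support, F d (coeff d q), ?_, ?_⟩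
  · have hsub : ∀ d ∈ q.support, (monomial d (coeff d q)).vars ⊆ q.vars := by
      intro d hd x hx
      exact (mem_vars x).2 ⟨d, hd, vars_monomial_subset hx⟩
    have h1 : op.δ k q = ∑ d ∈ q.support, op.δ k (monomial d (coeff d q)) := by
      conv_lhs => rw [(support_sum_monomial_coeff q).symm]
      exact delta_sum op k _ _
    rw [h1]
    have h2 : ∀ d ∈ q.support,
        op.δ k (monomial d (coeff d q))
          = (∑ x ∈ q.vars, op.δ (op.fac k) (pderiv x (monomial d (coeff d q))) *
              X (shiftVar x (Pi.single k 1))) + F d (coeff d q) := by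
      intro d hd
      rw [hFeq d (coeff d q)]
      congr 1
      refine Finset.sum_subset (hsub d hd) ?_
      intro x _ hx
      rw [pderiv_eq_zero_of_notMem_vars hx, delta_zero, zero_mul]
    rw [Finset.sum_congr rfl h2, Finset.sum_add_distrib]
    congr 1
    rw [Finset.sum_comm]
    refine Finset.sum_congr rfl ?_
    intro x _
    rw [← Finset.sum_mul]
    congr 1
    rw [← delta_sum op (op.fac k)]
    congr 1
    have : pderiv x q = pderiv x (∑ d ∈ q.support, monomial d (coeff d q)) := by
      rw [support_sum_monomial_coeff q]
    rw [this]
    exact (map_sum (pderiv x) _ _).symm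
  · intro y hy
    obtain ⟨d, hd, hyd⟩ := Finset.mem_biUnion.1 (vars_sum_subset _ _ hy)
    obtain ⟨w, hw, p, hp, rfl⟩ := hFb d (coeff d q) y hyd
    exact ⟨w, (mem_vars w).2 ⟨d, hd, vars_monomial_subset hw⟩, p, hp, rfl⟩

end TD

end DRed


namespace DRed

open MvPolynomial

section Words
variable {n M : ℕ}

/-- A word of operators realizing a given multi-exponent. -/
def wordOf (φ : Fin M → ℕ) : List (Fin M) :=
  (List.finRange M).flatMap (fun k => List.replicate (φ k) k)

theorem count_flatMap_replicate (φ : Fin M → ℕ) (l : List (Fin M)) (hl : l.Nodup)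
    (k : Fin M) (hk : k ∈ l) :
    (l.flatMap (fun j => List.replicate (φ j) j)).count k = φ k := by
  induction l with
  | nil => exact absurd hk List.not_mem_nil
  | cons j t ih =>
      rw [List.flatMap_cons, List.count_append]
      rcases List.mem_cons.1 hk with rfl | hkt
      · have hnt : k ∉ t := (List.nodup_cons.1 hl).1
        have ht : (t.flatMap (fun j => List.replicate (φ j) j)).count k = 0 := by
          rw [List.count_eq_zero]
          intro hmem
          obtain ⟨j, hjt, hjm⟩ := List.mem_flatMap.1 hmem
          rw [List.eq_of_mem_replicate hjm] at hnt
          exact hnt hjt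
        rw [ht, List.count_replicate]
        simp
      · have hkj : k ≠ j := by
          rintro rfl
          exact (List.nodup_cons.1 hl).1 hkt
        rw [List.count_replicate, if_neg (by simpa using hkj.symm), zero_add]
        exact ih (List.nodup_cons.1 hl).2 hkt

theorem cntW_wordOf (φ : Fin M → ℕ) : cntW (wordOf φ) = φ := by
  funext k
  exact count_flatMap_replicate φ (List.finRange M) (List.nodup_finRange M) k
    (List.mem_finRange k)

theorem mem_wordOf {φ : Fin M → ℕ} {k : Fin M} (hk : k ∈ wordOf φ) : φ k ≠ 0 := by
  obtain ⟨j, _, hjm⟩ := List.mem_flatMap.1 hk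
  have := List.eq_of_mem_replicate hjm
  subst this
  intro h0
  rw [h0] at hjm
  simp at hjm

end Words

section Transf
variable {K R : Type} [Field K] [CommRing R] [Algebra K R] {n M : ℕ}
variable (op : DStarOps K (MvPolynomial (DVar n M) R) M)

theorem applyWord_append (w₁ w₂ : List (Fin M)) (a : MvPolynomial (DVar n M) R) :
    applyWord op (w₁ ++ w₂) a = applyWord op w₁ (applyWord op w₂ a) :=
  List.foldr_append

variable {lt : DVar n M → DVar n M → Prop}

/-- Bounding variables of `op.δ j q` when all variables of `q` are below `v₁` and
`j` is `k` or of smaller rank. -/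
theorem vars_delta_lt_bound (hconst : ∀ (k : Fin M) (r : R), ∃ r' : R, op.δ k (C r) = C r')
    (hvar : ∀ (k : Fin M) (u : DVar n M),
      op.δ k (X u) = X (shiftVar u (Pi.single k 1))) (hrank : IsRanking lt op.σset op.ν) {k j : Fin M} (hj : j = k ∨ op.ν j < op.ν k)
    {q : MvPolynomial (DVar n M) R} {v₁ : DVar n M} (hq : ∀ z ∈ q.vars, lt z v₁) :
    ∀ y ∈ (op.δ j q).vars, lt y (shiftVar v₁ (Pi.single k 1)) := by
  intro y hy
  obtain ⟨z, hz, p, hp, rfl⟩ := vars_delta op hconst hvar j q y hy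
  have hpk : p = k ∨ op.ν p < op.ν k := by
    rcases hp with rfl | hp <;> rcases hj with rfl | hj
    · exact Or.inl rfl
    · exact Or.inr hj
    · exact Or.inr hp
    · exact Or.inr (lt_trans hp hj)
  rcases hpk with rfl | hpk
  · exact hrank.mono _ _ _ (hq z hz)
  · exact hrank.trans _ _ _ (hrank.mono _ _ _ (hq z hz)) (hrank.op_ord v₁ p k hpk)

/-- Carrying a "linear in the leader" decomposition through a word of operators. -/
theorem carry (hconst : ∀ (k : Fin M) (r : R), ∃ r' : R, op.δ k (C r) = C r')
    (hvar : ∀ (k : Fin M) (u : DVar n M),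
      op.δ k (X u) = X (shiftVar u (Pi.single k 1))) (hrank : IsRanking lt op.σset op.ν) (w : List (Fin M)) (v₀ : DVar n M) (s₀ T₀ : MvPolynomial (DVar n M) R)
    (hs₀ : ∀ x ∈ s₀.vars, lt x v₀) (hT₀ : ∀ x ∈ T₀.vars, lt x v₀) :
    ∃ s T, applyWord op w (s₀ * X v₀ + T₀)
        = s * X (shiftVar v₀ (cntW w)) + T
      ∧ (∀ x ∈ s.vars, lt x (shiftVar v₀ (cntW w)))
      ∧ (∀ x ∈ T.vars, lt x (shiftVar v₀ (cntW w)))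
      ∧ ∃ w' : List (Fin M), (∀ j ∈ w', j ∈ op.σset) ∧ s = applyWord op w' s₀ := by
  classical
  induction w with
  | nil =>
      refine ⟨s₀, T₀, by rw [shiftVar_cntW_nil]; rfl, ?_, ?_, ⟨[], by simp, rfl⟩⟩
      · intro x hx; rw [shiftVar_cntW_nil]; exact hs₀ x hx
      · intro x hx; rw [shiftVar_cntW_nil]; exact hT₀ x hx
  | cons k w ih =>
      obtain ⟨s, T, heq, hs, hT, w', hw', hsw⟩ := ih
      set v₁ := shiftVar v₀ (cntW w) with hv₁
      rw [applyWord_cons, heq]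
      rw [shiftVar_cntW_cons]
      by_cases hks : k ∈ op.σset
      · refine ⟨op.δ k s, op.δ k T, ?_, ?_, ?_, ⟨k :: w', ?_, by rw [applyWord_cons, hsw]⟩⟩
        · rw [op.map_add k, op.sigma_mul k hks, hvar]
        · intro x hx
          obtain ⟨z, hz, rfl⟩ := Finset.mem_image.1
            (vars_delta_sigma op hconst hvar k hks s hx)
          exact hrank.mono _ _ _ (hs z hz)
        · intro x hx
          obtain ⟨z, hz, rfl⟩ := Finset.mem_image.1
            (vars_delta_sigma op hconst hvar k hks T hx)
          exact hrank.mono _ _ _ (hT z hz)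
        · intro j hj
          rcases List.mem_cons.1 hj with rfl | hj
          · exact hks
          · exact hw' j hj
      · have hν1 : 1 ≤ op.ν k := op.nu_delta k hks
        have hfk : op.fac k ∈ op.σset := op.fac_mem k
        refine ⟨op.δ (op.fac k) s,
          op.δ k (s * X v₁ + T) - op.δ (op.fac k) s * X (shiftVar v₁ (Pi.single k 1)),
          by ring, ?_, ?_, ⟨op.fac k :: w', ?_, by rw [applyWord_cons, hsw]⟩⟩
        · intro x hx
          obtain ⟨z, hz, rfl⟩ := Finset.mem_image.1
            (vars_delta_sigma op hconst hvar (op.fac k) hfk s hx)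
          refine hrank.trans _ _ _ (hrank.mono _ _ _ (hs z hz)) ?_
          refine hrank.op_ord v₁ (op.fac k) k ?_
          rw [op.nu_sigma _ hfk]
          omega
        · intro x hx
          have hrw : op.δ k (s * X v₁ + T) - op.δ (op.fac k) s * X (shiftVar v₁ (Pi.single k 1))
              = op.δ k s * op.δ (op.fac k) (X v₁)
                + (∑ pq ∈ Finset.univ.filter
                    (fun pq : Fin M × Fin M =>
                      pq.1 ∉ op.σset ∧ pq.2 ∉ op.σset ∧ op.fac pq.1 = op.fac k ∧
                        op.fac pq.2 = op.fac k ∧ op.ν pq.1 + op.ν pq.2 ≤ op.ν k),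
                    op.α k pq.1 pq.2 • (op.δ pq.1 s * op.δ pq.2 (X v₁)))
                + op.δ k T := by
            rw [op.map_add k, op.prod_rule k hks s (X v₁), hvar k v₁]
            ring
          rw [hrw] at hx
          rcases Finset.mem_union.1 (vars_add_subset _ _ hx) with hx1 | hx1
          · rcases Finset.mem_union.1 (vars_add_subset _ _ hx1) with hx2 | hx2
            · rcases Finset.mem_union.1 (vars_mul _ _ hx2) with hx3 | hx3
              · exact vars_delta_lt_bound op hconst hvar hrank (Or.inl rfl) hs x hx3
              · rw [hvar] at hx3
                have := varsX_subset _ hx3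
                rw [Finset.mem_singleton] at this
                subst this
                refine hrank.op_ord v₁ (op.fac k) k ?_
                rw [op.nu_sigma _ hfk]
                omega
            · obtain ⟨p₁, p₂, hp₁, hp₂, hpsum, hx3⟩ := mem_vars_correction op hx2
              have hν₁ := op.nu_delta _ hp₁
              have hν₂ := op.nu_delta _ hp₂
              rcases hx3 with hx4 | hx4
              · exact vars_delta_lt_bound op hconst hvar hrank (Or.inr (by omega)) hs x hx4
              · rw [hvar] at hx4
                have := varsX_subset _ hx4
                rw [Finset.mem_singleton] at this
                subst this
                exact hrank.op_ord v₁ p₂ k (by omega)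
          · exact vars_delta_lt_bound op hconst hvar hrank (Or.inl rfl) hT x hx1
        · intro j hj
          rcases List.mem_cons.1 hj with rfl | hj
          · exact hfk
          · exact hw' j hj

/-- The `δ`-transform of `f` along a `δ`-type exponent `φ`: it is linear in its leader
`shiftVar u φ` with leading coefficient a `σ`-transform of the separant. -/
theorem delta_transform (hconst : ∀ (k : Fin M) (r : R), ∃ r' : R, op.δ k (C r) = C r')
    (hvar : ∀ (k : Fin M) (u : DVar n M),
      op.δ k (X u) = X (shiftVar u (Pi.single k 1))) (hrank : IsRanking lt op.σset op.ν) {f : MvPolynomial (DVar n M) R} {u : DVar n M}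
    (hu : IsLeader lt f u) {φ : Fin M → ℕ} (hφ : IsDeltaExp op.σset φ) :
    ∃ (w : List (Fin M)) (s T : MvPolynomial (DVar n M) R),
      applyWord op w f = s * X (shiftVar u φ) + T
      ∧ IsSigmaTransform op (pderiv u f) s
      ∧ (∀ x ∈ s.vars, lt x (shiftVar u φ))
      ∧ (∀ x ∈ T.vars, lt x (shiftVar u φ)) := by
  classical
  obtain ⟨k₀, hk₀, hφk₀⟩ := hφ
  have hν1 : 1 ≤ op.ν k₀ := op.nu_delta k₀ hk₀
  have hfk : op.fac k₀ ∈ op.σset := op.fac_mem k₀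
  set ψ : Fin M → ℕ := fun j => φ j - (Pi.single k₀ 1 : Fin M → ℕ) j with hψ
  set v₀ : DVar n M := shiftVar u (Pi.single k₀ 1) with hv₀
  -- base step
  obtain ⟨E, hEq, hEb⟩ := total_diff op hconst hvar k₀ hk₀ f
  have hbase : op.δ k₀ f
      = op.δ (op.fac k₀) (pderiv u f) * X v₀
        + ((∑ x ∈ f.vars.erase u, op.δ (op.fac k₀) (pderiv x f) *
            X (shiftVar x (Pi.single k₀ 1))) + E) := by
    rw [hEq, ← Finset.add_sum_erase f.vars _ hu.1]
    ring
  have hle_u : ∀ z ∈ f.vars, lt z u ∨ z = u := by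
    intro z hz
    by_cases hzu : z = u
    · exact Or.inr hzu
    · exact Or.inl (hu.2 z hz hzu)
  have hlow : ∀ {z : DVar n M}, (lt z u ∨ z = u) → ∀ {p : Fin M}, op.ν p < op.ν k₀ →
      lt (shiftVar z (Pi.single p 1)) v₀ := by
    intro z hz p hp
    have h2 : lt (shiftVar u (Pi.single p 1)) v₀ := hrank.op_ord u p k₀ hp
    rcases hz with hz | rfl
    · exact hrank.trans _ _ _ (hrank.mono _ _ _ hz) h2
    · exact h2
  have hs₀ : ∀ x ∈ (op.δ (op.fac k₀) (pderiv u f)).vars, lt x v₀ := by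
    intro x hx
    obtain ⟨z, hz, rfl⟩ := Finset.mem_image.1
      (vars_delta_sigma op hconst hvar (op.fac k₀) hfk _ hx)
    exact hlow (hle_u z (vars_pderiv u f hz)) (by rw [op.nu_sigma _ hfk]; omega)
  have hT₀ : ∀ x ∈ ((∑ x ∈ f.vars.erase u, op.δ (op.fac k₀) (pderiv x f) *
      X (shiftVar x (Pi.single k₀ 1))) + E).vars, lt x v₀ := by
    intro x hx
    rcases Finset.mem_union.1 (vars_add_subset _ _ hx) with hx1 | hx1
    · obtain ⟨z, hz, hx2⟩ := Finset.mem_biUnion.1 (vars_sum_subset _ _ hx1)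
      rcases Finset.mem_union.1 (vars_mul _ _ hx2) with hx3 | hx3
      · obtain ⟨z', hz', rfl⟩ := Finset.mem_image.1
          (vars_delta_sigma op hconst hvar (op.fac k₀) hfk _ hx3)
        exact hlow (hle_u z' (vars_pderiv z f hz')) (by rw [op.nu_sigma _ hfk]; omega)
      · have := varsX_subset _ hx3
        rw [Finset.mem_singleton] at this
        subst this
        exact hrank.mono _ _ _ (hu.2 z (Finset.mem_of_mem_erase hz)
          (Finset.ne_of_mem_erase hz))
    · obtain ⟨z, hz, p, hp, rfl⟩ := hEb x hx1
      exact hlow (hle_u z hz) hp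
  obtain ⟨s, T, heq, hsv, hTv, w', hw', hsw⟩ :=
    carry op hconst hvar hrank (wordOf ψ) v₀ _ _ hs₀ hT₀
  refine ⟨wordOf ψ ++ [k₀], s, T, ?_, ?_, ?_, ?_⟩
  · have happ : applyWord op (wordOf ψ ++ [k₀]) f = applyWord op (wordOf ψ) (op.δ k₀ f) := by
      rw [applyWord_append]
      rfl
    have hvfin : shiftVar v₀ (cntW (wordOf ψ)) = shiftVar u φ := by
      rw [hv₀, shiftVar_comp, cntW_wordOf]
      congr 1
      funext j
      have : (Pi.single k₀ 1 : Fin M → ℕ) j ≤ φ j := by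
        by_cases hj : j = k₀
        · subst hj; rw [Pi.single_eq_same]; omega
        · rw [Pi.single_eq_of_ne hj]; omega
      rw [hψ]
      simp only []
      omega
    rw [happ, hbase, heq, hvfin]
  · refine ⟨w' ++ [op.fac k₀], ?_, ?_⟩
    · intro j hj
      rcases List.mem_append.1 hj with hj | hj
      · exact hw' j hj
      · rw [List.mem_singleton] at hj
        subst hj
        exact hfk
    · rw [applyWord_append, hsw]
      rfl
  · intro x hx
    have hvfin : shiftVar v₀ (cntW (wordOf ψ)) = shiftVar u φ := by
      rw [hv₀, shiftVar_comp, cntW_wordOf]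
      congr 1
      funext j
      have : (Pi.single k₀ 1 : Fin M → ℕ) j ≤ φ j := by
        by_cases hj : j = k₀
        · subst hj; rw [Pi.single_eq_same]; omega
        · rw [Pi.single_eq_of_ne hj]; omega
      rw [hψ]
      simp only []
      omega
    rw [← hvfin]
    exact hsv x hx
  · intro x hx
    have hvfin : shiftVar v₀ (cntW (wordOf ψ)) = shiftVar u φ := by
      rw [hv₀, shiftVar_comp, cntW_wordOf]
      congr 1
      funext j
      have : (Pi.single k₀ 1 : Fin M → ℕ) j ≤ φ j := by
        by_cases hj : j = k₀
        · subst hj; rw [Pi.single_eq_same]; omega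
        · rw [Pi.single_eq_of_ne hj]; omega
      rw [hψ]
      simp only []
      omega
    rw [← hvfin]
    exact hTv x hx

/-- The `σ`-transform of `f` along a `σ`-type exponent `φ`. -/
theorem sigma_transform (hconst : ∀ (k : Fin M) (r : R), ∃ r' : R, op.δ k (C r) = C r')
    (hvar : ∀ (k : Fin M) (u : DVar n M),
      op.δ k (X u) = X (shiftVar u (Pi.single k 1))) (hrank : IsRanking lt op.σset op.ν) {f : MvPolynomial (DVar n M) R} {u : DVar n M}
    (hu : IsLeader lt f u) {φ : Fin M → ℕ} (hφ : IsSigmaExp op.σset φ) :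
    ∃ (w : List (Fin M)) (s Rp : MvPolynomial (DVar n M) R),
      applyWord op w f = s * X (shiftVar u φ) ^ degreeOf u f + Rp
      ∧ IsSigmaTransform op (initialOf u f) s
      ∧ (∀ x ∈ s.vars, lt x (shiftVar u φ))
      ∧ (∀ x ∈ Rp.vars, lt x (shiftVar u φ) ∨ x = shiftVar u φ)
      ∧ degreeOf (shiftVar u φ) Rp < degreeOf u f := by
  classical
  set w := wordOf φ with hw
  have hwσ : ∀ k ∈ w, k ∈ op.σset := by
    intro k hk
    exact hφ k (mem_wordOf hk)
  have hsplit := initial_mul_add_tail u f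
  refine ⟨w, applyWord op w (initialOf u f), applyWord op w (tailOf u f), ?_, ?_, ?_, ?_, ?_⟩
  · conv_lhs => rw [← hsplit]
    rw [applyWord_add, applyWord_mul op w hwσ, applyWord_pow op w hwσ,
      applyWord_X op hvar, cntW_wordOf]
  · exact ⟨w, hwσ, rfl⟩
  · intro x hx
    obtain ⟨z, hz, rfl⟩ := vars_applyWord_sigma op hconst hvar w hwσ _ x hx
    obtain ⟨hzne, hzf⟩ := vars_initial z hz
    rw [← cntW_wordOf φ]
    exact mono_word hrank w (hu.2 z hzf hzne)
  · intro x hx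
    obtain ⟨z, hz, rfl⟩ := vars_applyWord_sigma op hconst hvar w hwσ _ x hx
    have hzf := vars_tail_subset u f hz
    rw [← cntW_wordOf φ]
    by_cases hzu : z = u
    · subst hzu; exact Or.inr rfl
    · exact Or.inl (mono_word hrank w (hu.2 z hzf hzu))
  · rw [← cntW_wordOf φ]
    refine lt_of_le_of_lt (deg_applyWord_sigma op hconst hvar w hwσ u _) ?_
    exact deg_tail_lt (IsLeader.deg_pos hu)

end Transf

end DRed


namespace DRed

open MvPolynomial

section Measure
variable {n M : ℕ} {lt : DVar n M → DVar n M → Prop} {σs : Finset (Fin M)} {ν : Fin M → ℕ}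

/-- Lexicographic comparison of degree functions: smaller at the highest differing
variable. -/
def LexD (lt : DVar n M → DVar n M → Prop) (x y : (DVar n M) →₀ ℕ) : Prop :=
  ∃ i, (∀ j, lt i j → x j = y j) ∧ x i < y i

theorem lexD_wf (hr : IsRanking lt σs ν) : WellFounded (LexD lt) := by
  letI : IsTrichotomous (DVar n M) (Function.swap lt) := ⟨by
    intro a b h1 h2
    rcases hr.trichot b a with h | h | h
    · exact absurd h h1
    · exact h.symm
    · exact absurd h h2⟩
  have h := Finsupp.Lex.wellFounded' (r := Function.swap lt)
    (s := ((· < ·) : ℕ → ℕ → Prop)) (fun n => Nat.not_lt_zero n)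
    (wellFounded_lt) hr.wf
  refine Subrelation.wf ?_ h
  rintro x y ⟨i, h1, h2⟩
  exact ⟨i, h1, h2⟩

theorem lexD_trans (hr : IsRanking lt σs ν) {x y z : (DVar n M) →₀ ℕ}
    (h1 : LexD lt x y) (h2 : LexD lt y z) : LexD lt x z := by
  obtain ⟨i, hi, hilt⟩ := h1
  obtain ⟨j, hj, hjlt⟩ := h2
  rcases hr.trichot i j with h | rfl | h
  · exact ⟨j, fun j' hj' => (hi j' (hr.trans _ _ _ h hj')).trans (hj j' hj'),
      lt_of_le_of_lt (le_of_eq (hi j h)) hjlt⟩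
  · exact ⟨i, fun j' h' => (hi j' h').trans (hj j' h'), lt_trans hilt hjlt⟩
  · exact ⟨i, fun j' h' => (hi j' h').trans (hj j' (hr.trans _ _ _ h h')),
      lt_of_lt_of_le hilt (le_of_eq (hj i h))⟩

variable {S : Type} [CommRing S]

/-- The degree function of a polynomial, as a finitely supported function. -/
noncomputable def muP (g : MvPolynomial (DVar n M) S) : (DVar n M) →₀ ℕ :=
  ⟨g.vars, fun v => degreeOf v g, fun v => mem_vars_iff_deg⟩

theorem muP_apply (g : MvPolynomial (DVar n M) S) (v : DVar n M) :
    muP g v = degreeOf v g := rfl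

theorem lexD_step (hr : IsRanking lt σs ν) {g' g : MvPolynomial (DVar n M) S} {v : DVar n M}
    (h1 : degreeOf v g' < degreeOf v g)
    (h2 : ∀ w, lt v w → degreeOf w g' ≤ degreeOf w g) :
    LexD lt (muP g') (muP g) := by
  classical
  set T := (g'.vars ∪ g.vars).filter (fun w => degreeOf w g' ≠ degreeOf w g) with hT
  have hvT : v ∈ T := by
    rw [hT, Finset.mem_filter]
    refine ⟨Finset.mem_union_right _ (mem_vars_iff_deg.2 (by omega)), by omega⟩
  obtain ⟨i, hiT, hmax⟩ := exists_max hr T ⟨v, hvT⟩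
  have hiT' := Finset.mem_filter.1 hiT
  refine ⟨i, ?_, ?_⟩
  · intro j hij
    by_contra hne
    have hne' : degreeOf j g' ≠ degreeOf j g := hne
    have hjT : j ∈ T := by
      rw [hT, Finset.mem_filter]
      refine ⟨?_, hne'⟩
      by_cases hj0 : degreeOf j g' = 0
      · exact Finset.mem_union_right _ (mem_vars_iff_deg.2 (by omega))
      · exact Finset.mem_union_left _ (mem_vars_iff_deg.2 hj0)
    have hji : j ≠ i := fun he => hr.irrefl i (he ▸ hij)
    exact hr.irrefl i (hr.trans _ _ _ hij (hmax j hjT hji))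
  · show degreeOf i g' < degreeOf i g
    rcases hr.trichot i v with hiv | rfl | hvi
    · have hvne : v ≠ i := fun he => hr.irrefl i (he ▸ hiv)
      exact absurd (hmax v hvT hvne) (asymm_of hr hiv)
    · exact h1
    · exact lt_of_le_of_ne (h2 i hvi) hiT'.2

theorem rkLe_of_lex (hr : IsRanking lt σs ν) {g₀ g : MvPolynomial (DVar n M) S}
    (h : LexD lt (muP g₀) (muP g) ∨ muP g₀ = muP g) : RkLe lt g₀ g := by
  by_cases hc : g₀.vars = ∅
  · exact Or.inl ⟨coeff 0 g₀, eq_C_of_vars_empty hc⟩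
  obtain ⟨u₀, hu₀m, hu₀max⟩ := exists_max hr g₀.vars (Finset.nonempty_of_ne_empty hc)
  have hu₀ : IsLeader lt g₀ u₀ := ⟨hu₀m, hu₀max⟩
  have hd₀ : degreeOf u₀ g₀ ≠ 0 := mem_vars_iff_deg.1 hu₀m
  rcases h with ⟨i, habove, hilt⟩ | heq
  · have hilt : degreeOf i g₀ < degreeOf i g := hilt
    have habove' : ∀ j, lt i j → degreeOf j g₀ = degreeOf j g := habove
    have hgne : i ∈ g.vars := mem_vars_iff_deg.2 (by omega)
    obtain ⟨ug, hugm, hugmax⟩ := exists_max hr g.vars ⟨i, hgne⟩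
    have hug : IsLeader lt g ug := ⟨hugm, hugmax⟩
    have hmem_le : ∀ x, x ∈ g.vars → lt x ug ∨ x = ug := by
      intro x hx
      by_cases hxu : x = ug
      · exact Or.inr hxu
      · exact Or.inl (hugmax x hx hxu)
    rcases hr.trichot u₀ i with h1 | rfl | h1
    · have : lt u₀ ug := by
        rcases hmem_le i hgne with h2 | rfl
        · exact hr.trans _ _ _ h1 h2
        · exact h1
      exact Or.inr (Or.inl ⟨u₀, ug, hu₀, hug, Or.inl this⟩)
    · have hmem : u₀ ∈ g.vars := mem_vars_iff_deg.2 (by omega)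
      rcases hmem_le u₀ hmem with h2 | rfl
      · exact Or.inr (Or.inl ⟨u₀, ug, hu₀, hug, Or.inl h2⟩)
      · exact Or.inr (Or.inl ⟨u₀, u₀, hu₀, hug, Or.inr ⟨rfl, hilt⟩⟩)
    · have hdeq : degreeOf u₀ g₀ = degreeOf u₀ g := habove' u₀ h1
      have hmem : u₀ ∈ g.vars := mem_vars_iff_deg.2 (by omega)
      rcases hmem_le u₀ hmem with h2 | rfl
      · exact Or.inr (Or.inl ⟨u₀, ug, hu₀, hug, Or.inl h2⟩)
      · exact Or.inr (Or.inr ⟨u₀, u₀, hu₀, hug, rfl, hdeq⟩)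
  · have hdeg : ∀ w, degreeOf w g₀ = degreeOf w g := fun w => DFunLike.congr_fun heq w
    have hleader : IsLeader lt g u₀ := by
      refine ⟨mem_vars_iff_deg.2 (by rw [← hdeg]; exact hd₀), ?_⟩
      intro x hx hxu
      have : x ∈ g₀.vars := mem_vars_iff_deg.2 (by rw [hdeg]; exact mem_vars_iff_deg.1 hx)
      exact hu₀max x this hxu
    exact Or.inr (Or.inr ⟨u₀, u₀, hu₀, hleader, rfl, hdeg u₀⟩)

theorem reduction_step (hr : IsRanking lt σs ν)
    {g p s Rp : MvPolynomial (DVar n M) S} {v : DVar n M} {e : ℕ}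
    (he : 0 < e) (hdeg : e ≤ degreeOf v g)
    (hp : p = s * X v ^ e + Rp)
    (hs : ∀ x ∈ s.vars, lt x v)
    (hRp : ∀ x ∈ Rp.vars, lt x v ∨ x = v)
    (hRdeg : degreeOf v Rp < e) :
    degreeOf v (s * g - initialOf v g * X v ^ (degreeOf v g - e) * p) < degreeOf v g
    ∧ ∀ w, lt v w →
        degreeOf w (s * g - initialOf v g * X v ^ (degreeOf v g - e) * p) ≤ degreeOf w g := by
  classical
  have hvg : 0 < degreeOf v g := lt_of_lt_of_le he hdeg
  have hvs : v ∉ s.vars := fun h => hr.irrefl v (hs v h)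
  have hvc : v ∉ (initialOf v g).vars := fun h => (vars_initial v h).1 rfl
  set D := degreeOf v g with hD
  set c := initialOf v g with hc
  set t := tailOf v g with ht
  have hsplit : c * X v ^ D + t = g := initial_mul_add_tail v g
  have hpow : (X v : MvPolynomial (DVar n M) S) ^ D = X v ^ (D - e) * X v ^ e := by
    rw [← pow_add]
    congr 1
    omega
  have hkey : s * g - c * X v ^ (D - e) * p = s * t - c * X v ^ (D - e) * Rp := by
    rw [hp, ← hsplit, hpow]
    ring
  constructor
  · rw [hkey]
    refine lt_of_le_of_lt (degreeOf_sub_le v _ _) ?_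
    rw [Nat.max_lt]
    constructor
    · refine lt_of_le_of_lt (degreeOf_mul_le v s t) ?_
      rw [not_mem_vars_deg hvs, zero_add]
      exact deg_tail_lt hvg
    · refine lt_of_le_of_lt (degreeOf_mul_le v _ Rp) ?_
      have h1 : degreeOf v (c * X v ^ (D - e)) ≤ D - e := by
        refine le_trans (degreeOf_mul_le v c _) ?_
        rw [not_mem_vars_deg hvc, zero_add]
        refine le_trans (degreeOf_X_pow_le v v (D - e)) ?_
        simp
      omega
  · intro w hw
    have hwv : w ≠ v := fun he' => hr.irrefl v (he' ▸ hw)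
    have hws : degreeOf w s = 0 := by
      refine not_mem_vars_deg fun h => ?_
      exact hr.irrefl v (hr.trans _ _ _ hw (hs w h))
    have hwRp : degreeOf w Rp = 0 := by
      refine not_mem_vars_deg fun h => ?_
      rcases hRp w h with h1 | rfl
      · exact hr.irrefl v (hr.trans _ _ _ hw h1)
      · exact hr.irrefl w hw
    have hwpow : degreeOf w ((X v : MvPolynomial (DVar n M) S) ^ (D - e)) = 0 := by
      have := degreeOf_X_pow_le (S := S) v w (D - e)
      rw [if_neg hwv] at this
      omega
    rw [hkey]
    refine le_trans (degreeOf_sub_le w _ _) ?_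
    rw [Nat.max_le]
    constructor
    · refine le_trans (degreeOf_mul_le w s t) ?_
      rw [hws, zero_add]
      exact deg_tail_le v w g
    · refine le_trans (degreeOf_mul_le w _ Rp) ?_
      rw [hwRp, add_zero]
      refine le_trans (degreeOf_mul_le w c _) ?_
      rw [hwpow, add_zero]
      exact deg_initial_le v w g

end Measure

end DRed

/-- **`D*`-reduction lemma.** For every `g` there are `H` (a product of
`σ`-transforms of initials and separants of elements of `A`) and `g₀` reduced with
respect to `A` with `rk g₀ ≤ rk g` and `H·g ≡ g₀ mod [A]_D`. -/
theorem dStar_reduction_lemma {K R : Type} [Field K] [CommRing R] [Algebra K R]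
    {n M : ℕ} (op : DStarOps K (MvPolynomial (DVar n M) R) M)
    (hvar : ∀ (k : Fin M) (u : DVar n M),
      op.δ k (X u) = X (shiftVar u (Pi.single k 1)))
    (hconst : ∀ (k : Fin M) (r : R), ∃ r' : R, op.δ k (C r) = C r')
    (lt : DVar n M → DVar n M → Prop)
    (hrank : IsRanking lt op.σset op.ν)
    (A : Set (MvPolynomial (DVar n M) R)) (hA : ∀ f ∈ A, ¬ IsConst f)
    (g : MvPolynomial (DVar n M) R) :
    ∃ H g₀ : MvPolynomial (DVar n M) R,
      (∃ l : List (MvPolynomial (DVar n M) R), H = l.prod ∧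
        ∀ h ∈ l, ∃ f ∈ A, ∃ u : DVar n M, IsLeader lt f u ∧
          (IsSigmaTransform op (initialOf u f) h ∨
           IsSigmaTransform op (pderiv u f) h)) ∧
      ReducedWrtSet lt op.σset g₀ A ∧
      RkLe lt g₀ g ∧
      InDIdealGen op A (H * g - g₀) := by
  classical
  have hwf : WellFounded (fun a b : MvPolynomial (DVar n M) R =>
      DRed.LexD lt (DRed.muP a) (DRed.muP b)) :=
    InvImage.wf DRed.muP (DRed.lexD_wf hrank)
  suffices hmain : ∀ g : MvPolynomial (DVar n M) R,
      ∃ H g₀ : MvPolynomial (DVar n M) R,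
        (∃ l : List (MvPolynomial (DVar n M) R), H = l.prod ∧
          ∀ h ∈ l, ∃ f ∈ A, ∃ u : DVar n M, IsLeader lt f u ∧
            (IsSigmaTransform op (initialOf u f) h ∨
             IsSigmaTransform op (pderiv u f) h)) ∧
        ReducedWrtSet lt op.σset g₀ A ∧
        (DRed.LexD lt (DRed.muP g₀) (DRed.muP g) ∨ DRed.muP g₀ = DRed.muP g) ∧
        InDIdealGen op A (H * g - g₀) by
    obtain ⟨H, g₀, h1, h2, h3, h4⟩ := hmain g
    exact ⟨H, g₀, h1, h2, DRed.rkLe_of_lex hrank h3, h4⟩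
  intro g
  induction g using hwf.induction with
  | _ g ihg =>
    by_cases hred : ReducedWrtSet lt op.σset g A
    · refine ⟨1, g, ⟨[], by simp, by simp⟩, hred, Or.inr rfl, ?_⟩
      intro I hAI hdI
      have h0 : (1 : MvPolynomial (DVar n M) R) * g - g = 0 := by ring
      rw [h0]
      exact I.zero_mem
    · obtain ⟨f, hfA, hnred⟩ : ∃ f ∈ A, ¬ ReducedWrt lt op.σset g f := by
        by_contra hcon
        push_neg at hcon
        exact hred hcon
      obtain ⟨u, hu, hnot⟩ : ∃ u, IsLeader lt f u ∧
          ¬((∀ φ, IsDeltaExp op.σset φ → shiftVar u φ ∉ g.vars) ∧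
            (∀ φ, IsSigmaExp op.σset φ → degreeOf (shiftVar u φ) g < degreeOf u f)) := by
        by_contra hcon
        push_neg at hcon
        exact hnred fun u hu => hcon u hu
      rcases not_and_or.1 hnot with hcase | hcase
      · -- a δ-transform of the leader of `f` occurs in `g`
        push_neg at hcase
        obtain ⟨φ, hφ, hvmem⟩ := hcase
        obtain ⟨w, s, T, hpEq, hsT, hsb, hTb⟩ :=
          DRed.delta_transform op hconst hvar hrank hu hφ
        set v := shiftVar u φ with hv
        have hdegv : 1 ≤ degreeOf v g :=
          Nat.pos_of_ne_zero (DRed.mem_vars_iff_deg.1 hvmem)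
        have hRdeg : degreeOf v T < 1 := by
          have hvT : v ∉ T.vars := fun h => hrank.irrefl v (hTb v h)
          rw [DRed.not_mem_vars_deg hvT]
          omega
        have hstep := DRed.reduction_step hrank (g := g) (p := applyWord op w f)
          (s := s) (Rp := T) (v := v) (e := 1) one_pos hdegv
          (by rw [hpEq, pow_one]) hsb (fun x hx => Or.inl (hTb x hx)) hRdeg
        set g' := s * g - initialOf v g * X v ^ (degreeOf v g - 1) * applyWord op w f
          with hg'
        obtain ⟨H', g₀, ⟨l', hl', hall⟩, hred₀, hlex₀, hid₀⟩ :=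
          ihg g' (DRed.lexD_step hrank hstep.1 hstep.2)
        refine ⟨s * H', g₀, ⟨s :: l', by rw [List.prod_cons, hl'], ?_⟩, hred₀, ?_, ?_⟩
        · intro h hh
          rcases List.mem_cons.1 hh with rfl | hh
          · exact ⟨f, hfA, u, hu, Or.inr hsT⟩
          · exact hall h hh
        · left
          have hstep' := DRed.lexD_step hrank hstep.1 hstep.2
          rcases hlex₀ with h1 | h1
          · exact DRed.lexD_trans hrank h1 hstep'
          · rw [h1]
            exact hstep'
        · intro I hAI hdI
          have hpI : applyWord op w f ∈ I :=
            DRed.applyWord_mem_dIdeal op hdI w (hAI hfA)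
          have hcomb : s * H' * g - g₀
              = H' * (initialOf v g * X v ^ (degreeOf v g - 1) * applyWord op w f)
                + (H' * g' - g₀) := by
            rw [hg']
            ring
          rw [hcomb]
          exact I.add_mem (I.mul_mem_left _ (I.mul_mem_left _ hpI)) (hid₀ I hAI hdI)
      · -- a σ-transform of the leader of `f` occurs in `g` with too large a degree
        push_neg at hcase
        obtain ⟨φ, hφ, hdge⟩ := hcase
        obtain ⟨w, s, Rp, hpEq, hsT, hsb, hRb, hRdeg⟩ :=
          DRed.sigma_transform op hconst hvar hrank hu hφ
        set v := shiftVar u φ with hv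
        have he : 0 < degreeOf u f := DRed.IsLeader.deg_pos hu
        have hstep := DRed.reduction_step hrank (g := g) (p := applyWord op w f)
          (s := s) (Rp := Rp) (v := v) (e := degreeOf u f) he hdge hpEq hsb hRb hRdeg
        set g' := s * g -
            initialOf v g * X v ^ (degreeOf v g - degreeOf u f) * applyWord op w f
          with hg'
        obtain ⟨H', g₀, ⟨l', hl', hall⟩, hred₀, hlex₀, hid₀⟩ :=
          ihg g' (DRed.lexD_step hrank hstep.1 hstep.2)
        refine ⟨s * H', g₀, ⟨s :: l', by rw [List.prod_cons, hl'], ?_⟩, hred₀, ?_, ?_⟩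
        · intro h hh
          rcases List.mem_cons.1 hh with rfl | hh
          · exact ⟨f, hfA, u, hu, Or.inl hsT⟩
          · exact hall h hh
        · left
          have hstep' := DRed.lexD_step hrank hstep.1 hstep.2
          rcases hlex₀ with h1 | h1
          · exact DRed.lexD_trans hrank h1 hstep'
          · rw [h1]
            exact hstep'
        · intro I hAI hdI
          have hpI : applyWord op w f ∈ I :=
            DRed.applyWord_mem_dIdeal op hdI w (hAI hfA)
          have hcomb : s * H' * g - g₀
              = H' * (initialOf v g * X v ^ (degreeOf v g - degreeOf u f)
                  * applyWord op w f)
                + (H' * g' - g₀) := by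
            rw [hg']
            ring
          rw [hcomb]
          exact I.add_mem (I.mul_mem_left _ (I.mul_mem_left _ hpI)) (hid₀ I hAI hdI)
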